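/- Let A be a 2-dimensional vector space over a field K of characteristic zero, • a bilinear product on A satisfying the left Leibniz identity u•(v•w) = (u•v)•w + v•(u•w), and ω a nondegenerate skew-symmetric bilinear form on A satisfying ω(u, v•w) − ω(v, u•w) = (1/2)ω(u•v, w) − (1/2)ω(v•u, w) for all u,v,w. Suppose • is not anticommutative, i.e., u•v + v•u ≠ 0 for some u,v ∈ A. Then there exists a basis (e₁, e₂) of A such that e₁•e₁ = e₁•e₂ = e₂•e₁ = 0 and e₂•e₂ = e₁. -/

import Mathlib

/-- A 2-dimensional symplectic left Leibniz algebra which is not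
anticommutative has a basis `(e₁, e₂)` with `e₁•e₁ = e₁•e₂ = e₂•e₁ = 0` and
`e₂•e₂ = e₁`. -/
theorem stmt18 {K A : Type*} [Field K] [CharZero K] [AddCommGroup A] [Module K A]
    [FiniteDimensional K A] (hdim : Module.finrank K A = 2)
    (mul : A →ₗ[K] A →ₗ[K] A) (ω : A →ₗ[K] A →ₗ[K] K)
    (hleib : ∀ u v w : A, mul u (mul v w) = mul (mul u v) w + mul v (mul u w))
    (hskew : ∀ u v : A, ω u v = - ω v u)
    (hnondeg : ∀ u : A, (∀ v : A, ω u v = 0) → u = 0)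
    (hsymp : ∀ u v w : A, ω u (mul v w) - ω v (mul u w)
      = (1/2 : K) * ω (mul u v) w - (1/2 : K) * ω (mul v u) w)
    (hnotlie : ∃ u v : A, mul u v + mul v u ≠ 0) :
    ∃ e₁ e₂ : A, LinearIndependent K ![e₁, e₂] ∧
      Submodule.span K {e₁, e₂} = ⊤ ∧
      mul e₁ e₁ = 0 ∧ mul e₁ e₂ = 0 ∧ mul e₂ e₁ = 0 ∧ mul e₂ e₂ = e₁ := by
  obtain ⟨u, v, huv⟩ := hnotlie
  set s : A := mul u v + mul v u with hs_def
  -- squares annihilate on the left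
  have hsq : ∀ x w : A, mul (mul x x) w = 0 := by
    intro x w
    have h := hleib x x w
    exact right_eq_add.mp h
  have hann : ∀ w : A, mul s w = 0 := by
    intro w
    have h1 := hsq (u + v) w
    have h2 := hsq u w
    have h3 := hsq v w
    simp only [map_add, LinearMap.add_apply] at h1
    rw [h2, h3] at h1
    simpa [hs_def, map_add, LinearMap.add_apply, add_comm] using h1
  have hss : ω s s = 0 := by have h := hskew s s; linear_combination h / 2
  obtain ⟨t, hst⟩ : ∃ t : A, ω s t ≠ 0 := by
    by_contra h
    push_neg at h
    exact huv (hnondeg s h)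
  have hts' : ω t s = - ω s t := by rw [hskew t s]
  -- linear independence of s, t
  have hind : LinearIndependent K ![s, t] := by
    rw [LinearIndependent.pair_iff]
    intro a b hab
    have h1 : ω s (a • s + b • t) = 0 := by rw [hab]; simp
    simp only [map_add, map_smul, smul_eq_mul, hss, mul_zero, zero_add] at h1
    have hb : b = 0 := by
      rcases mul_eq_zero.mp h1 with h | h
      · exact h
      · exact absurd h hst
    subst hb
    simp only [zero_smul, add_zero, smul_eq_zero] at hab
    rcases hab with h | h
    · exact ⟨h, rfl⟩
    · exact absurd h huv
  have hspan : Submodule.span K {s, t} = ⊤ := by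
    have hr : Set.range ![s, t] = {s, t} := by
      ext x; simp [Matrix.range_cons, Matrix.range_empty]; tauto
    have := hind.span_eq_top_of_card_eq_finrank (by simp [hdim])
    rwa [hr] at this
  have hpair : ∀ x : A, ∃ α β : K, α • s + β • t = x := by
    intro x
    have : x ∈ Submodule.span K {s, t} := hspan ▸ Submodule.mem_top
    exact Submodule.mem_span_pair.mp this
  have hcoef : ∀ α β : K, α • s + β • t = 0 → α = 0 ∧ β = 0 :=
    LinearIndependent.pair_iff.mp hind
  obtain ⟨a, b, hts⟩ := hpair (mul t s)
  obtain ⟨c, d, htt⟩ := hpair (mul t t)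
  -- symplectic with (t,s,s): b = 0
  have hb : b = 0 := by
    have h := hsymp t s s
    rw [hann s, hann t, ← hts] at h
    simp only [map_zero, LinearMap.zero_apply, map_add, map_smul, LinearMap.add_apply,
      LinearMap.smul_apply, smul_eq_mul, hss, hts', mul_zero] at h
    have hb0 : b * ω s t = 0 := by linear_combination -2 * h
    rcases mul_eq_zero.mp hb0 with h' | h'
    · exact h'
    · exact absurd h' hst
  rw [hb, zero_smul, add_zero] at hts
  -- symplectic with (t,s,t): a = -2d
  have had : a = -2 * d := by
    have h := hsymp t s t
    rw [hann t, ← htt, ← hts] at h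
    simp only [map_zero, LinearMap.zero_apply, map_add, map_smul, LinearMap.add_apply,
      LinearMap.smul_apply, smul_eq_mul, hss, hts', mul_zero] at h
    have h0 : (a + 2 * d) * ω s t = 0 := by linear_combination -2 * h
    rcases mul_eq_zero.mp h0 with h' | h'
    · linear_combination h'
    · exact absurd h' hst
  -- leibniz (t,t,t): d = 0
  have hd : d = 0 := by
    have h := hleib t t t
    have h2 : mul (mul t t) t = 0 := by
      exact right_eq_add.mp h
    have key : mul (mul t t) t = (d * c) • s + (d * d) • t := by
      conv_lhs => rw [← htt]
      simp only [map_add, LinearMap.add_apply, map_smul, LinearMap.smul_apply]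
      rw [hann t, ← htt]
      module
    rw [key] at h2
    exact mul_self_eq_zero.mp (hcoef _ _ h2).2
  have ha : a = 0 := by rw [had, hd]; ring
  rw [ha, zero_smul] at hts
  rw [hd, zero_smul, add_zero] at htt
  -- hts : 0 = mul t s, htt : c • s = mul t t
  -- c ≠ 0
  have hc : c ≠ 0 := by
    intro hc0
    apply huv
    rw [hc0, zero_smul] at htt
    rw [hs_def]
    obtain ⟨α, β, hu⟩ := hpair u
    obtain ⟨γ, δ, hv⟩ := hpair v
    rw [← hu, ← hv]
    simp only [map_add, map_smul, LinearMap.add_apply, LinearMap.smul_apply,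
      hann s, hann t, ← hts, ← htt]
    simp
  refine ⟨c • s, t, ?_, ?_, ?_, ?_, ?_, ?_⟩
  · rw [LinearIndependent.pair_iff]
    intro α β hab
    rw [smul_smul] at hab
    obtain ⟨h1, h2⟩ := hcoef _ _ hab
    exact ⟨(mul_eq_zero.mp h1).resolve_right hc, h2⟩
  · rw [eq_top_iff]
    intro x _
    obtain ⟨α, β, hx⟩ := hpair x
    rw [Submodule.mem_span_pair]
    refine ⟨α * c⁻¹, β, ?_⟩
    rw [smul_smul, mul_assoc, inv_mul_cancel₀ hc, mul_one, hx]
  · simp [map_smul, hann]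
  · simp [map_smul, hann]
  · simp [map_smul, ← hts]
  · simp [map_smul, ← htt]
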